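/- Let R be a Noetherian commutative ring and I a nonzero ideal of R such that R is I-adically separated (⋂_{n≥1} Iⁿ = 0) but R is not I-adically complete. If φ : R̂^I → R is a nonzero R-linear map from the I-adic completion of R, then φ(1) is a zerodivisor on R (i.e., φ(1) is not a nonzerodivisor). -/

import Mathlib

universe u

open Submodule TensorProduct

section Aux

variable {R : Type u} [CommRing R] (I : Ideal R)

lemma aux_smul_top_eq (n : ℕ) : (I ^ n • ⊤ : Ideal R) = I ^ n := by
  rw [smul_eq_mul, Ideal.mul_top]

variable [IsNoetherianRing R]

/-- If the `n`-th component of an element of the adic completion vanishes, the element lies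
in `I ^ n • ⊤`. -/
lemma aux_mem_smul_top_of_val_eq_zero (n : ℕ) (x : AdicCompletion I R)
    (hx : x.val n = 0) : x ∈ (I ^ n • ⊤ : Submodule R (AdicCompletion I R)) := by
  set J : Submodule R R := (I ^ n • ⊤ : Submodule R R) with hJ
  have hexact := AdicCompletion.map_exact (I := I) (injective_subtype J)
    (LinearMap.exact_subtype_mkQ J) (mkQ_surjective J)
  have hxker : AdicCompletion.map I J.mkQ x = 0 := by
    obtain ⟨f, rfl⟩ := AdicCompletion.mk_surjective I R x
    have hfn : f n ∈ J := by
      have h0 : Submodule.Quotient.mk (p := J) (f n) = 0 := hx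
      exact (Submodule.Quotient.mk_eq_zero J).mp h0
    rw [AdicCompletion.map_mk]
    apply AdicCompletion.mk_zero_of
    refine ⟨n, fun m hm => ⟨m, le_refl m, m, le_refl m, ?_⟩⟩
    have hfm : f m ∈ J := by
      have h1 : f n - f m ∈ J := SModEq.sub_mem.mp (f.property hm)
      simpa using sub_mem hfn h1
    have : (AdicCompletion.AdicCauchySequence.map I J.mkQ f) m = 0 := by
      simpa using (Submodule.Quotient.mk_eq_zero J).mpr hfm
    rw [this]
    exact zero_mem _
  obtain ⟨y, hy⟩ := (hexact x).mp hxker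
  -- `J` is finitely generated, pick generators
  obtain ⟨k, a, haspan⟩ :=
    Submodule.fg_iff_exists_fin_generating_family.mp (IsNoetherian.noetherian J)
  set F : (Fin k → R) →ₗ[R] R := Fintype.linearCombination R a with hF
  have hrangeF : LinearMap.range F = J := by
    rw [hF, Fintype.range_linearCombination, haspan]
  -- a surjection onto `J`
  set p : (Fin k → R) →ₗ[R] J :=
    F.codRestrict J (fun v => hrangeF ▸ LinearMap.mem_range_self F v) with hp
  have hpsurj : Function.Surjective p := by
    rintro ⟨m, hm⟩
    rw [← hrangeF] at hm
    obtain ⟨v, hv⟩ := hm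
    exact ⟨v, Subtype.ext hv⟩
  obtain ⟨z, hz⟩ := AdicCompletion.map_surjective I hpsurj y
  have hxz : AdicCompletion.map I F z = x := by
    have : J.subtype ∘ₗ p = F := LinearMap.subtype_comp_codRestrict F J _
    rw [← this, ← AdicCompletion.map_comp_apply, hz, hy]
  rw [← hxz]
  obtain ⟨f, rfl⟩ := AdicCompletion.mk_surjective I _ z
  have hsum : AdicCompletion.map I F (AdicCompletion.mk I _ f) =
      ∑ i, a i • AdicCompletion.mk I R
        (AdicCompletion.AdicCauchySequence.map I (LinearMap.proj i) f) := by
    rw [AdicCompletion.map_mk]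
    ext m
    rw [AdicCompletion.val_sum]
    simp only [AdicCompletion.val_smul]
    simp only [AdicCompletion.mk_apply_coe, Submodule.mkQ_apply,
      AdicCompletion.AdicCauchySequence.map_apply_coe, hF,
      Fintype.linearCombination_apply, LinearMap.proj_apply]
    simp only [← Submodule.mkQ_apply, ← map_smul, ← map_sum]
    congr 1
    simp [smul_eq_mul, mul_comm]
    exact Finset.sum_congr rfl fun i _ => (Algebra.smul_def _ _).symm
  rw [hsum]
  refine Submodule.sum_mem _ (fun i _ => ?_)
  have hai : a i ∈ I ^ n := by
    have : a i ∈ J := haspan ▸ Submodule.subset_span (Set.mem_range_self i)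
    rwa [hJ, show (I ^ n • ⊤ : Submodule R R) = (I ^ n • ⊤ : Ideal R) from rfl,
      aux_smul_top_eq] at this
  exact Submodule.smul_mem_smul hai Submodule.mem_top

/-- Approximation: every element of the adic completion is congruent to an element of `R`
modulo `I ^ n`. -/
lemma aux_approx (x : AdicCompletion I R) (n : ℕ) :
    ∃ s : R, x - AdicCompletion.of I R s ∈ (I ^ n • ⊤ : Submodule R (AdicCompletion I R)) := by
  obtain ⟨s, hs⟩ := Submodule.Quotient.mk_surjective _ (x.val n)
  refine ⟨s, aux_mem_smul_top_of_val_eq_zero I n _ ?_⟩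
  rw [AdicCompletion.val_sub_apply, AdicCompletion.of_apply, Submodule.mkQ_apply, hs, sub_self]

/-- Geometric series: `1 + a` becomes invertible in the adic completion for `a ∈ I`. -/
lemma aux_unit {a : R} (ha : a ∈ I) :
    ∃ u : AdicCompletion I R, AdicCompletion.of I R (1 + a) * u = 1 := by
  have hc : ∀ m : ℕ, (∑ i ∈ Finset.range m, (-a) ^ i) ≡
      (∑ i ∈ Finset.range (m + 1), (-a) ^ i) [SMOD (I ^ m • ⊤ : Submodule R R)] := by
    intro m
    rw [SModEq.sub_mem, Finset.sum_range_succ]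
    have : (-a) ^ m ∈ (I ^ m : Ideal R) := Ideal.pow_mem_pow (I.neg_mem ha) m
    rw [show (I ^ m • ⊤ : Submodule R R) = (I ^ m • ⊤ : Ideal R) from rfl, aux_smul_top_eq]
    simpa using neg_mem this
  refine ⟨AdicCompletion.mk I R
    (AdicCompletion.AdicCauchySequence.mk I R (fun m => ∑ i ∈ Finset.range m, (-a) ^ i) hc), ?_⟩
  ext m
  show Submodule.Quotient.mk ((1 : R) + a) *
      Submodule.Quotient.mk (∑ i ∈ Finset.range m, (-a) ^ i) =
      Submodule.Quotient.mk (p := (I ^ m • ⊤ : Submodule R R)) 1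
  rw [show (Submodule.Quotient.mk ((1 : R) + a) *
      Submodule.Quotient.mk (∑ i ∈ Finset.range m, (-a) ^ i) :
      R ⧸ (I ^ m • ⊤ : Submodule R R)) =
      Submodule.Quotient.mk ((1 + a) * ∑ i ∈ Finset.range m, (-a) ^ i) from rfl]
  rw [Submodule.Quotient.eq]
  have hgeom := geom_sum_mul (-a) m
  have hkey : (1 + a) * (∑ i ∈ Finset.range m, (-a) ^ i) - 1 = -((-a) ^ m) := by
    linear_combination -hgeom
  rw [hkey, aux_smul_top_eq]
  exact neg_mem (Ideal.pow_mem_pow (I.neg_mem ha) m)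

end Aux

/-- **Maps out of the adic completion evaluate to zerodivisors at 1.**
Let `R` be a Noetherian ring and `I` a nonzero ideal such that `R` is `I`-adically separated
(`⋂_{n ≥ 1} Iⁿ = 0`) but not `I`-adically complete (the canonical map `R → R̂^I` is not
bijective).  If `φ : R̂^I → R` is a nonzero `R`-linear map, then `φ 1` is a zerodivisor on
`R`. -/
theorem adicCompletion_hom_apply_one_zerodivisor
    (R : Type u) [CommRing R] [IsNoetherianRing R] (I : Ideal R) (hI : I ≠ ⊥)
    (hsep : (⨅ n : ℕ, I ^ (n + 1)) = ⊥)
    (hnotcomplete : ¬ Function.Bijective (algebraMap R (AdicCompletion I R)))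
    (φ : AdicCompletion I R →ₗ[R] R) (hφ : φ ≠ 0) :
    φ 1 ∉ nonZeroDivisors R := by
  intro hr
  apply hnotcomplete
  have hofalg : ∀ s : R, algebraMap R (AdicCompletion I R) s = AdicCompletion.of I R s :=
    fun s => rfl
  -- injectivity of the canonical map, from separatedness
  have hinj : Function.Injective (algebraMap R (AdicCompletion I R)) := by
    intro s t hst
    have h0 : AdicCompletion.of I R (s - t) = 0 := by
      rw [map_sub, ← hofalg, ← hofalg, hst, sub_self]
    have hmem : s - t ∈ (⨅ n : ℕ, I ^ (n + 1)) := by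
      rw [Submodule.mem_iInf]
      intro n
      have h1 : (AdicCompletion.of I R (s - t)).val (n + 1) = 0 := by rw [h0]; rfl
      rw [AdicCompletion.of_apply, Submodule.mkQ_apply, Submodule.Quotient.mk_eq_zero] at h1
      rwa [show (I ^ (n+1) • ⊤ : Submodule R R) = (I ^ (n+1) • ⊤ : Ideal R) from rfl,
        aux_smul_top_eq] at h1
    rw [hsep] at hmem
    exact sub_eq_zero.mp (Ideal.mem_bot.mp hmem)
  refine ⟨hinj, ?_⟩
  -- the image of `φ` on `I ^ n • ⊤` lies in `I ^ n`
  have hφmem : ∀ (n : ℕ) (y : AdicCompletion I R),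
      y ∈ (I ^ n • ⊤ : Submodule R (AdicCompletion I R)) → φ y ∈ I ^ n := by
    intro n y hy
    have h1 : φ y ∈ Submodule.map φ (I ^ n • ⊤ : Submodule R (AdicCompletion I R)) :=
      Submodule.mem_map_of_mem hy
    rw [Submodule.map_smul''] at h1
    have h2 : I ^ n • Submodule.map φ ⊤ ≤ (I ^ n • ⊤ : Submodule R R) :=
      Submodule.smul_mono le_rfl le_top
    have h3 := h2 h1
    rwa [show (I ^ n • ⊤ : Submodule R R) = (I ^ n • ⊤ : Ideal R) from rfl,
      aux_smul_top_eq] at h3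
  -- key identity : `φ 1 • x = of (φ x)`
  have key : ∀ x : AdicCompletion I R, φ 1 • x = AdicCompletion.of I R (φ x) := by
    intro x
    rw [← sub_eq_zero]
    apply IsHausdorff.haus (inferInstance : IsHausdorff I (AdicCompletion I R))
    intro n
    rw [SModEq.zero]
    obtain ⟨s, hs⟩ := aux_approx I x n
    have h1 : φ 1 • x - φ 1 • AdicCompletion.of I R s
        ∈ (I ^ n • ⊤ : Submodule R (AdicCompletion I R)) := by
      rw [← smul_sub]
      exact Submodule.smul_mem _ _ hs
    have hφof : φ (AdicCompletion.of I R s) = s * φ 1 := by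
      rw [← hofalg, Algebra.algebraMap_eq_smul_one, map_smul, smul_eq_mul]
    have h2 : φ x - s * φ 1 ∈ I ^ n := by
      have := hφmem n _ hs
      rwa [map_sub, hφof] at this
    have h3 : AdicCompletion.of I R (φ x) - AdicCompletion.of I R (s * φ 1)
        ∈ (I ^ n • ⊤ : Submodule R (AdicCompletion I R)) := by
      rw [← map_sub]
      have : AdicCompletion.of I R (φ x - s * φ 1) = (φ x - s * φ 1) • 1 := by
        rw [← hofalg, Algebra.algebraMap_eq_smul_one]
      rw [this]
      exact Submodule.smul_mem_smul h2 Submodule.mem_top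
    have h4 : φ 1 • AdicCompletion.of I R s = AdicCompletion.of I R (s * φ 1) := by
      rw [← map_smul, smul_eq_mul, mul_comm]
    have h3' : AdicCompletion.of I R (φ x) - φ 1 • AdicCompletion.of I R s
        ∈ (I ^ n • ⊤ : Submodule R (AdicCompletion I R)) := by
      rw [h4]; exact h3
    have heq : φ 1 • x - AdicCompletion.of I R (φ x)
        = (φ 1 • x - φ 1 • AdicCompletion.of I R s) -
          (AdicCompletion.of I R (φ x) - φ 1 • AdicCompletion.of I R s) := by abel
    rw [heq]
    exact sub_mem h1 h3'
  -- `φ 1` is regular on `R`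
  have hreg : IsSMulRegular R (φ 1) := by
    intro x y hxy
    simp only [smul_eq_mul] at hxy
    have h0 : (x - y) * φ 1 = 0 := by
      rw [sub_mul, mul_comm x, mul_comm y, hxy, sub_self]
    exact sub_eq_zero.mp (hr.2 _ h0)
  -- `φ 1` is regular on the adic completion, by flatness
  have hregA : IsSMulRegular (AdicCompletion I R) (φ 1) := by
    have h1 : IsSMulRegular ((AdicCompletion I R) ⊗[R] R) (φ 1) :=
      IsSMulRegular.lTensor (AdicCompletion I R) hreg
    exact h1.of_injective (TensorProduct.rid R (AdicCompletion I R)).symm.toLinearMap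
      (TensorProduct.rid R (AdicCompletion I R)).symm.injective
  -- hence `φ` is injective and the completion is a finite `R`-module
  have hφinj : Function.Injective φ := by
    intro x y hxy
    have h0 := congrArg (AdicCompletion.of I R) hxy
    rw [← key, ← key] at h0
    exact hregA h0
  have hNoeth : IsNoetherian R (AdicCompletion I R) := isNoetherian_of_injective φ hφinj
  have hfin : Module.Finite R (AdicCompletion I R) := inferInstance
  -- Nakayama on the cokernel of `R → R̂`
  set S : Submodule R (AdicCompletion I R) := LinearMap.range (AdicCompletion.of I R) with hS
  have hle : (⊤ : Submodule R ((AdicCompletion I R) ⧸ S)) ≤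
      I • (⊤ : Submodule R ((AdicCompletion I R) ⧸ S)) := by
    rintro q -
    obtain ⟨x, rfl⟩ := S.mkQ_surjective q
    obtain ⟨s, hs⟩ := aux_approx I x 1
    rw [pow_one] at hs
    have h2 : S.mkQ x = S.mkQ (x - AdicCompletion.of I R s) := by
      rw [map_sub, show S.mkQ (AdicCompletion.of I R s) = 0 from
        (Submodule.Quotient.mk_eq_zero S).mpr ⟨s, rfl⟩, sub_zero]
    rw [h2]
    have h3 := Submodule.mem_map_of_mem (f := S.mkQ) hs
    rw [Submodule.map_smul''] at h3
    exact Submodule.smul_mono le_rfl le_top h3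
  obtain ⟨r', hr'1, hr'⟩ :=
    Submodule.exists_sub_one_mem_and_smul_eq_zero_of_fg_of_le_smul I ⊤
      (Module.Finite.fg_top (R := R) (M := (AdicCompletion I R) ⧸ S)) hle
  have hr'S : ∀ x : AdicCompletion I R, r' • x ∈ S := by
    intro x
    have h0 : r' • S.mkQ x = 0 := hr' _ Submodule.mem_top
    rw [← map_smul] at h0
    exact (Submodule.Quotient.mk_eq_zero S).mp h0
  -- `of r'` is a unit
  obtain ⟨u, hu⟩ := aux_unit I hr'1
  have hr'eq : (1 : R) + (r' - 1) = r' := by ring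
  rw [hr'eq] at hu
  -- surjectivity
  intro x
  have h1 : x = AdicCompletion.of I R r' * (u * x) := by
    rw [← mul_assoc, hu, one_mul]
  have h2 : AdicCompletion.of I R r' * (u * x) = r' • (u * x) := by
    rw [← hofalg, ← Algebra.smul_def]
  obtain ⟨s, hs⟩ := hr'S (u * x)
  exact ⟨s, by rw [hofalg, hs, ← h2, ← h1]⟩
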